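/- Characteristic polynomial of the GGT matrix and the product formula at 1 (Proposition 2.5(c)): Let n ≥ 1 and α_0,…,α_{n−1} ∈ ℂ with |α_k| < 1 for 0 ≤ k ≤ n−2 and |α_{n−1}| = 1, let (Φ_j) be the monic polynomials generated by the Szegő recursion, and let G = G(α_0,…,α_{n−1}) be the GGT matrix. Then det(z·Id_n − G) = Φ_n(z) for every z ∈ ℂ; in particular det(Id_n − G) = ∏_{k=0}^{n−1} (1−γ_k), where γ_0,…,γ_{n−1} are the deformed Verblunsky coefficients associated with α_0,…,α_{n−1}. -/

import Mathlib

open MeasureTheory Complex Finset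
open scoped Real ComplexConjugate

noncomputable section

/-- `ρ = sqrt(1 - |a|²)`. -/
def rho (a : ℂ) : ℝ := Real.sqrt (1 - ‖a‖ ^ 2)

/-- The GGT (Hessenberg) matrix associated with Verblunsky coefficients
`α 0, …, α (n-1)`, with the convention `α (-1) = -1`. -/
def GGT (n : ℕ) (α : ℕ → ℂ) : Matrix (Fin n) (Fin n) ℂ :=
  Matrix.of fun i j =>
    if (i : ℕ) ≤ (j : ℕ) then
      -(if (i : ℕ) = 0 then (-1 : ℂ) else α ((i : ℕ) - 1)) * (starRingEnd ℂ) (α (j : ℕ)) *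
        ∏ p ∈ Finset.Ico (i : ℕ) (j : ℕ), (rho (α p) : ℂ)
    else if (i : ℕ) = (j : ℕ) + 1 then (rho (α (j : ℕ)) : ℂ)
    else 0

/-- The monic orthogonal (Szegő) polynomials generated by the Szegő recursion
`Φ₀ = 1`, `Φ_{j+1}(z) = z Φ_j(z) - conj(α_j) Φ_j^*(z)`, where
`Φ_j^*` is the reversed polynomial (conjugated coefficients in reverse order). -/
def szego (α : ℕ → ℂ) : ℕ → Polynomial ℂ
  | 0 => 1
  | j + 1 =>
      Polynomial.X * szego α j -
        Polynomial.C ((starRingEnd ℂ) (α j)) *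
          Polynomial.reflect j ((szego α j).map (starRingEnd ℂ))


namespace GGTaux
open Polynomial

lemma natDegree_reflect_le (p : ℂ[X]) (N : ℕ) (h : p.natDegree ≤ N) :
    (reflect N p).natDegree ≤ N := by
  refine natDegree_le_iff_coeff_eq_zero.mpr fun m hm => ?_
  rw [coeff_reflect, revAt_eq_self_of_lt hm]
  exact coeff_eq_zero_of_natDegree_lt (lt_of_le_of_lt h hm)

lemma eval_one_reflect (p : ℂ[X]) (N : ℕ) (h : p.natDegree ≤ N) :
    (reflect N p).eval 1 = p.eval 1 := by
  rw [Polynomial.eval_eq_sum_range' (Nat.lt_succ_of_le (natDegree_reflect_le p N h)),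
    Polynomial.eval_eq_sum_range' (Nat.lt_succ_of_le h)]
  simp only [one_pow, mul_one, coeff_reflect]
  rw [← Finset.sum_range_reflect (fun i => p.coeff i) (N + 1)]
  refine Finset.sum_congr rfl fun i hi => ?_
  rw [revAt_le (by simpa using Nat.lt_succ_iff.mp (Finset.mem_range.mp hi))]
  congr 1

lemma szego_natDegree_le (α : ℕ → ℂ) : ∀ k, (szego α k).natDegree ≤ k := by
  intro k
  induction k with
  | zero => simp [szego]
  | succ k ih =>
    show (Polynomial.X * szego α k - _).natDegree ≤ k + 1
    refine (natDegree_sub_le _ _).trans (max_le ?_ ?_)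
    · refine natDegree_mul_le.trans ?_
      rw [natDegree_X]
      omega
    · refine (natDegree_mul_le).trans ?_
      have := natDegree_reflect_le ((szego α k).map (starRingEnd ℂ)) k
        (natDegree_map_le.trans ih)
      simpa using this.trans (Nat.le_succ k)

lemma reflect_reflect_succ (p : ℂ[X]) (k : ℕ) (hp : p.natDegree ≤ k) :
    reflect (k + 1) (reflect k p) = X * p := by
  ext i
  rw [coeff_reflect, coeff_reflect]
  match i with
  | 0 =>
    rw [revAt_le (Nat.zero_le _), Nat.sub_zero, revAt_eq_self_of_lt (Nat.lt_succ_self k)]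
    rw [coeff_eq_zero_of_natDegree_lt (lt_of_le_of_lt hp (Nat.lt_succ_self k))]
    simp [mul_coeff_zero]
  | (i + 1) =>
    rw [coeff_X_mul]
    rcases le_or_gt (i + 1) (k + 1) with hle | hlt
    · rw [revAt_le hle]
      have h2 : k + 1 - (i + 1) ≤ k := by omega
      rw [revAt_le h2]
      congr 1
      omega
    · rw [revAt_eq_self_of_lt hlt, revAt_eq_self_of_lt (by omega)]
      rw [coeff_eq_zero_of_natDegree_lt (by omega), coeff_eq_zero_of_natDegree_lt (by omega)]

lemma conj_conj_map (p : ℂ[X]) : (p.map (starRingEnd ℂ)).map (starRingEnd ℂ) = p := by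
  rw [Polynomial.map_map]
  convert Polynomial.map_id
  ext x
  simp

lemma map_conjAux : True := trivial
lemma sstar_succ (α : ℕ → ℂ) (k : ℕ) :
    reflect (k + 1) ((szego α (k + 1)).map (starRingEnd ℂ)) =
      reflect k ((szego α k).map (starRingEnd ℂ)) - C (α k) * (X * szego α k) := by
  have hdeg : ((szego α k).map (starRingEnd ℂ)).natDegree ≤ k :=
    natDegree_map_le.trans (szego_natDegree_le α k)
  have hstep : szego α (k + 1) = Polynomial.X * szego α k -
      Polynomial.C ((starRingEnd ℂ) (α k)) *
        Polynomial.reflect k ((szego α k).map (starRingEnd ℂ)) := rfl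
  rw [hstep, Polynomial.map_sub, Polynomial.map_mul, Polynomial.map_mul, map_C,
    Polynomial.map_X]
  rw [← reflect_map, conj_conj_map, Complex.conj_conj]
  have h1 : reflect (k + 1) (X * (szego α k).map (starRingEnd ℂ)) =
      reflect k ((szego α k).map (starRingEnd ℂ)) := by
    have := reflect_mul (X : ℂ[X]) ((szego α k).map (starRingEnd ℂ))
      (natDegree_X_le) hdeg
    rw [show (1 : ℕ) + k = k + 1 from add_comm 1 k] at this
    rw [this, reflect_one_X, one_mul]
  rw [reflect_sub, h1, reflect_C_mul, reflect_reflect_succ _ _ (szego_natDegree_le α k)]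
def b0 (α : ℕ → ℂ) (i : ℕ) : ℂ := if i = 0 then (-1 : ℂ) else α (i - 1)

def Ent (α : ℕ → ℂ) (z : ℂ) (i j : ℕ) : ℂ :=
  if i ≤ j then (if i = j then z else 0) + b0 α i * (starRingEnd ℂ) (α j) *
      ∏ p ∈ Finset.Ico i j, (rho (α p) : ℂ)
  else if i = j + 1 then -(rho (α j) : ℂ) else 0

def Mm (α : ℕ → ℂ) (z : ℂ) (n : ℕ) : Matrix (Fin n) (Fin n) ℂ :=
  Matrix.of fun i j => Ent α z i j

def wv (α : ℕ → ℂ) (n : ℕ) (i : ℕ) : ℂ :=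
  b0 α i * ∏ p ∈ Finset.Ico i (n - 1), (rho (α p) : ℂ)

def Bm (α : ℕ → ℂ) (z : ℂ) (n : ℕ) : Matrix (Fin n) (Fin n) ℂ :=
  Matrix.of fun i j => if (j : ℕ) + 1 = n then wv α n i else Ent α z i j

lemma Mm_eq (α : ℕ → ℂ) (z : ℂ) (n : ℕ) :
    z • (1 : Matrix (Fin n) (Fin n) ℂ) - GGT n α = Mm α z n := by
  ext i j
  simp only [Matrix.sub_apply, Matrix.smul_apply, Matrix.one_apply, GGT, Mm, Ent, b0,
    Matrix.of_apply, smul_eq_mul, Fin.ext_iff]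
  split_ifs <;> first | ring1 | (exfalso; omega)

lemma detM_succ (α : ℕ → ℂ) (z : ℂ) (n : ℕ) :
    (Mm α z (n + 1)).det =
      z * (Mm α z n).det + (starRingEnd ℂ) (α n) * (Bm α z (n + 1)).det := by
  classical
  set A := Mm α z (n + 1) with hA
  have hcol : (fun i => A i (Fin.last n)) =
      (fun i : Fin (n + 1) => z * (if i = Fin.last n then (1 : ℂ) else 0)) +
        (fun i : Fin (n + 1) => (starRingEnd ℂ) (α n) * wv α (n + 1) i) := by
    funext i
    have hi : (i : ℕ) ≤ n := Nat.lt_succ_iff.mp i.isLt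
    simp only [Pi.add_apply, hA, Mm, Matrix.of_apply, Ent, wv, Fin.val_last,
      Nat.add_sub_cancel, if_pos hi, Fin.ext_iff]
    split_ifs <;> ring
  have step1 : A.det =
      z * (A.updateCol (Fin.last n) fun i => if i = Fin.last n then (1 : ℂ) else 0).det +
      (starRingEnd ℂ) (α n) * (A.updateCol (Fin.last n) fun i => wv α (n + 1) i).det := by
    conv_lhs => rw [← Matrix.updateCol_eq_self A (Fin.last n), hcol]
    rw [Matrix.det_updateCol_add]
    congr 1
    · rw [show (fun i : Fin (n + 1) => z * (if i = Fin.last n then (1 : ℂ) else 0)) =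
        z • (fun i : Fin (n + 1) => if i = Fin.last n then (1 : ℂ) else 0) from rfl,
        Matrix.det_updateCol_smul]
    · rw [show (fun i : Fin (n + 1) => (starRingEnd ℂ) (α n) * wv α (n + 1) i) =
        (starRingEnd ℂ) (α n) • (fun i : Fin (n + 1) => wv α (n + 1) i) from rfl,
        Matrix.det_updateCol_smul]
  have hB : A.updateCol (Fin.last n) (fun i => wv α (n + 1) i) = Bm α z (n + 1) := by
    ext i j
    rw [Matrix.updateCol_apply]
    have hj' : (j = Fin.last n) ↔ ((j : ℕ) = n) := by rw [Fin.ext_iff, Fin.val_last]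
    by_cases hv : (j : ℕ) = n
    · rw [if_pos (hj'.mpr hv)]
      show _ = Bm α z (n + 1) i j
      simp only [Bm, Matrix.of_apply, if_pos (by omega : (j : ℕ) + 1 = n + 1)]
    · rw [if_neg (fun h => hv (hj'.mp h))]
      show A i j = _
      simp only [Bm, Matrix.of_apply, if_neg (by omega : ¬ ((j : ℕ) + 1 = n + 1)), hA, Mm]
  have hE : (A.updateCol (Fin.last n) fun i => if i = Fin.last n then (1 : ℂ) else 0).det =
      (Mm α z n).det := by
    set D := A.updateCol (Fin.last n) fun i => if i = Fin.last n then (1 : ℂ) else 0 with hD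
    rw [Matrix.det_succ_column D (Fin.last n), Finset.sum_eq_single (Fin.last n)]
    · have h1 : D (Fin.last n) (Fin.last n) = 1 := by simp [hD, Matrix.updateCol_apply]
      have h2 : ((-1 : ℂ)) ^ ((Fin.last n : ℕ) + (Fin.last n : ℕ)) = 1 := by
        rw [Fin.val_last, ← two_mul, pow_mul]
        norm_num
      rw [h1, h2, Fin.succAbove_last, one_mul, one_mul]
      congr 1
      ext i j
      have hj : j.castSucc ≠ Fin.last n := (Fin.castSucc_lt_last j).ne
      simp [hD, Matrix.updateCol_apply, hj, hA, Mm, Ent]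
    · intro i _ hi
      have : D i (Fin.last n) = 0 := by simp [hD, Matrix.updateCol_apply, hi]
      rw [this]
      ring
    · intro h
      exact absurd (Finset.mem_univ _) h
  rw [step1, hB, hE]

lemma detB_succ (α : ℕ → ℂ) (z : ℂ) (n : ℕ) :
    (Bm α z (n + 2)).det =
      α n * (Mm α z (n + 1)).det + ((rho (α n) : ℂ)) ^ 2 * (Bm α z (n + 1)).det := by
  classical
  set B := Bm α z (n + 2) with hB
  rw [Matrix.det_succ_row B (Fin.last (n + 1)), Fin.sum_univ_castSucc, Fin.sum_univ_castSucc]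
  have hzero : ∀ j : Fin n,
      (-1 : ℂ) ^ ((Fin.last (n + 1) : ℕ) + ((j.castSucc.castSucc : Fin (n + 2)) : ℕ)) *
        B (Fin.last (n + 1)) j.castSucc.castSucc *
        (B.submatrix (Fin.last (n + 1)).succAbove (j.castSucc.castSucc).succAbove).det = 0 := by
    intro j
    have hj : (j : ℕ) < n := j.isLt
    have hent : B (Fin.last (n + 1)) j.castSucc.castSucc = 0 := by
      simp only [hB, Bm, Matrix.of_apply, Ent, Fin.val_last, Fin.coe_castSucc]
      rw [if_neg (by omega), if_neg (by omega), if_neg (by omega)]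
    rw [hent]
    ring
  rw [Finset.sum_eq_zero (fun j _ => hzero j), zero_add]
  -- the last term
  have hlast : (-1 : ℂ) ^ ((Fin.last (n + 1) : ℕ) + ((Fin.last (n + 1) : Fin (n + 2)) : ℕ)) *
      B (Fin.last (n + 1)) (Fin.last (n + 1)) *
      (B.submatrix (Fin.last (n + 1)).succAbove (Fin.last (n + 1)).succAbove).det =
      α n * (Mm α z (n + 1)).det := by
    have h1 : B (Fin.last (n + 1)) (Fin.last (n + 1)) = α n := by
      simp only [hB, Bm, Matrix.of_apply, Fin.val_last]
      rw [if_pos trivial]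
      simp [wv, b0, Finset.Ico_self]
    have h2 : (-1 : ℂ) ^ ((Fin.last (n + 1) : ℕ) + ((Fin.last (n + 1) : Fin (n + 2)) : ℕ)) = 1 := by
      rw [Fin.val_last, ← two_mul, pow_mul]
      norm_num
    have h3 : B.submatrix (Fin.last (n + 1)).succAbove (Fin.last (n + 1)).succAbove =
        Mm α z (n + 1) := by
      rw [Fin.succAbove_last]
      ext i j
      have : (j : ℕ) + 1 ≠ n + 2 := by have := j.isLt; omega
      simp only [Matrix.submatrix_apply, hB, Bm, Matrix.of_apply, Fin.coe_castSucc, Mm,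
        if_neg this]
    rw [h1, h2, h3, one_mul]
  rw [hlast]
  -- the middle term
  have hmid : (-1 : ℂ) ^ ((Fin.last (n + 1) : ℕ) + (((Fin.last n).castSucc : Fin (n + 2)) : ℕ)) *
      B (Fin.last (n + 1)) (Fin.last n).castSucc *
      (B.submatrix (Fin.last (n + 1)).succAbove ((Fin.last n).castSucc).succAbove).det =
      ((rho (α n) : ℂ)) ^ 2 * (Bm α z (n + 1)).det := by
    have h1 : B (Fin.last (n + 1)) (Fin.last n).castSucc = -(rho (α n) : ℂ) := by
      simp only [hB, Bm, Matrix.of_apply, Fin.val_last, Fin.coe_castSucc, Ent]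
      rw [if_neg (by omega), if_neg (by omega), if_pos trivial]
    have h2 : (-1 : ℂ) ^ ((Fin.last (n + 1) : ℕ) + (((Fin.last n).castSucc : Fin (n + 2)) : ℕ)) =
        -1 := by
      rw [Fin.val_last, Fin.coe_castSucc, Fin.val_last,
        show n + 1 + n = 2 * n + 1 by omega, pow_succ, pow_mul]
      norm_num
    have h3 : B.submatrix (Fin.last (n + 1)).succAbove ((Fin.last n).castSucc).succAbove =
        (Bm α z (n + 1)).updateCol (Fin.last n)
          (fun i => (rho (α n) : ℂ) * wv α (n + 1) i) := by
      ext i j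
      rw [Matrix.submatrix_apply, Fin.succAbove_last, Matrix.updateCol_apply]
      by_cases hv : (j : ℕ) < n
      · have hcol : ((Fin.last n).castSucc : Fin (n + 2)).succAbove j = j.castSucc := by
          apply Fin.succAbove_of_castSucc_lt
          simp only [Fin.lt_def, Fin.coe_castSucc, Fin.val_last]
          omega
        have hjne : ¬ (j = Fin.last n) := by
          intro h
          rw [h, Fin.val_last] at hv
          omega
        rw [hcol, if_neg hjne]
        have hc1 : ¬ ((j : ℕ) + 1 = n + 2) := by omega
        have hc2 : ¬ ((j : ℕ) + 1 = n + 1) := by omega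
        simp only [hB, Bm, Matrix.of_apply, Fin.coe_castSucc, if_neg hc1, if_neg hc2]
      · have hv' : (j : ℕ) = n := by have := j.isLt; omega
        have hj : j = Fin.last n := Fin.ext (by rw [hv', Fin.val_last])
        have hcol : ((Fin.last n).castSucc : Fin (n + 2)).succAbove j = j.succ := by
          apply Fin.succAbove_of_le_castSucc
          simp only [Fin.le_def, Fin.coe_castSucc, Fin.val_last]
          omega
        rw [hcol, if_pos hj]
        have hc1 : ((j.succ : Fin (n + 2)) : ℕ) + 1 = n + 2 := by
          rw [Fin.val_succ, hv']
        simp only [hB, Bm, Matrix.of_apply, hc1, if_pos hc1, Fin.coe_castSucc]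
        show wv α (n + 2) (i : ℕ) = _
        have hile : (i : ℕ) ≤ n := Nat.lt_succ_iff.mp i.isLt
        simp only [wv]
        rw [show n + 2 - 1 = n + 1 from rfl, show n + 1 - 1 = n from rfl,
          Finset.prod_Ico_succ_top hile]
        ring
    have h4 : ((Bm α z (n + 1)).updateCol (Fin.last n)
        (fun i => (rho (α n) : ℂ) * wv α (n + 1) i)).det =
        (rho (α n) : ℂ) * (Bm α z (n + 1)).det := by
      rw [show (fun i : Fin (n + 1) => (rho (α n) : ℂ) * wv α (n + 1) i) =
        (rho (α n) : ℂ) • (fun i : Fin (n + 1) => wv α (n + 1) i) from rfl,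
        Matrix.det_updateCol_smul]
      congr 1
      have : (fun i : Fin (n + 1) => wv α (n + 1) (i : ℕ)) =
          fun i => Bm α z (n + 1) i (Fin.last n) := by
        funext i
        simp only [Bm, Matrix.of_apply, Fin.val_last]
        rw [if_pos trivial]
      rw [this, Matrix.updateCol_eq_self]
    rw [h1, h2, h3, h4]
    ring
  rw [hmid]
  ring

lemma main_ind (α : ℕ → ℂ) : ∀ n, (∀ k, k < n → ‖α k‖ ≤ 1) →
    (∀ z : ℂ, (Mm α z n).det = (szego α n).eval z) ∧
    (∀ z : ℂ, (Bm α z (n + 1)).det =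
      -(Polynomial.reflect n ((szego α n).map (starRingEnd ℂ))).eval z) := by
  intro n
  induction n with
  | zero =>
    intro _
    constructor
    · intro z
      simp [Mm, szego, Matrix.det_fin_zero]
    · intro z
      rw [Matrix.det_fin_one]
      show (if ((0 : Fin 1) : ℕ) + 1 = 1 then wv α 1 ((0 : Fin 1) : ℕ)
        else Ent α z ((0 : Fin 1) : ℕ) ((0 : Fin 1) : ℕ)) = _
      rw [if_pos (by norm_num)]
      simp [wv, b0, szego, Finset.Ico_self]
  | succ n ih =>
    intro h
    obtain ⟨hM, hBi⟩ := ih (fun k hk => h k (Nat.lt_succ_of_lt hk))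
    have hM1 : ∀ z : ℂ, (Mm α z (n + 1)).det = (szego α (n + 1)).eval z := by
      intro z
      rw [detM_succ, hM, hBi]
      show _ = ((Polynomial.X * szego α n - Polynomial.C ((starRingEnd ℂ) (α n)) *
        Polynomial.reflect n ((szego α n).map (starRingEnd ℂ)))).eval z
      simp only [Polynomial.eval_sub, Polynomial.eval_mul, Polynomial.eval_X, Polynomial.eval_C]
      ring
    refine ⟨hM1, ?_⟩
    intro z
    have habs : ‖α n‖ ≤ 1 := h n (Nat.lt_succ_self n)
    have hrho : ((rho (α n) : ℝ) : ℂ) ^ 2 = 1 - α n * (starRingEnd ℂ) (α n) := by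
      have h0 : (0 : ℝ) ≤ 1 - ‖α n‖ ^ 2 := by
        nlinarith [norm_nonneg (α n)]
      calc ((rho (α n) : ℝ) : ℂ) ^ 2 = ((rho (α n) ^ 2 : ℝ) : ℂ) := by push_cast; ring
        _ = ((1 - ‖α n‖ ^ 2 : ℝ) : ℂ) := by rw [rho, Real.sq_sqrt h0]
        _ = 1 - (Complex.normSq (α n) : ℂ) := by rw [← Complex.sq_norm]; push_cast; ring
        _ = 1 - α n * (starRingEnd ℂ) (α n) := by rw [Complex.mul_conj]
    have hev : (szego α (n + 1)).eval z = z * (szego α n).eval z -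
        (starRingEnd ℂ) (α n) *
          (Polynomial.reflect n ((szego α n).map (starRingEnd ℂ))).eval z := by
      show ((Polynomial.X * szego α n - Polynomial.C ((starRingEnd ℂ) (α n)) *
        Polynomial.reflect n ((szego α n).map (starRingEnd ℂ)))).eval z = _
      simp only [Polynomial.eval_sub, Polynomial.eval_mul, Polynomial.eval_X, Polynomial.eval_C]
    rw [detB_succ, hM1, hBi, sstar_succ, hev]
    simp only [Polynomial.eval_sub, Polynomial.eval_mul, Polynomial.eval_X, Polynomial.eval_C]
    rw [hrho]
    ring

lemma szego_eval_one (α : ℕ → ℂ) (γ : ℕ → ℂ) (n : ℕ)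
    (hγ : ∀ k < n, γ k = (starRingEnd ℂ) (α k) *
      ∏ j ∈ Finset.range k, (1 - (starRingEnd ℂ) (γ j)) / (1 - γ j)) :
    ∀ k, k ≤ n → (szego α k).eval 1 = ∏ j ∈ Finset.range k, (1 - γ j) := by
  intro k
  induction k with
  | zero => intro _; simp [szego]
  | succ k ih =>
    intro hk
    have ha := ih (by omega)
    have heval : (szego α (k + 1)).eval 1 =
        (szego α k).eval 1 - (starRingEnd ℂ) (α k) * (starRingEnd ℂ) ((szego α k).eval 1) := by
      show ((Polynomial.X * szego α k - Polynomial.C ((starRingEnd ℂ) (α k)) *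
        Polynomial.reflect k ((szego α k).map (starRingEnd ℂ))).eval 1) = _
      rw [Polynomial.eval_sub, Polynomial.eval_mul, Polynomial.eval_mul, Polynomial.eval_X,
        Polynomial.eval_C, one_mul,
        eval_one_reflect _ _ (Polynomial.natDegree_map_le.trans (szego_natDegree_le α k)),
        Polynomial.eval_one_map]
    have hterm : ∀ j ∈ Finset.range k,
        (1 - γ j) * ((1 - (starRingEnd ℂ) (γ j)) / (1 - γ j)) = (starRingEnd ℂ) (1 - γ j) := by
      intro j _
      rw [map_sub, map_one]
      rcases eq_or_ne (1 - γ j) 0 with h0 | h0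
      · rw [h0, zero_mul]
        have hγ1 : γ j = 1 := by linear_combination -h0
        rw [hγ1, map_one, sub_self]
      · rw [mul_comm, div_mul_cancel₀ _ h0]
    have hkey : (starRingEnd ℂ) (α k) * (starRingEnd ℂ) (∏ j ∈ Finset.range k, (1 - γ j)) =
        (∏ j ∈ Finset.range k, (1 - γ j)) * γ k := by
      calc (starRingEnd ℂ) (α k) * (starRingEnd ℂ) (∏ j ∈ Finset.range k, (1 - γ j))
          = (starRingEnd ℂ) (α k) * ∏ j ∈ Finset.range k, (starRingEnd ℂ) (1 - γ j) := by
            rw [map_prod]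
        _ = (starRingEnd ℂ) (α k) *
            ∏ j ∈ Finset.range k, ((1 - γ j) * ((1 - (starRingEnd ℂ) (γ j)) / (1 - γ j))) := by
            rw [Finset.prod_congr rfl hterm]
        _ = (∏ j ∈ Finset.range k, (1 - γ j)) * ((starRingEnd ℂ) (α k) *
            ∏ j ∈ Finset.range k, (1 - (starRingEnd ℂ) (γ j)) / (1 - γ j)) := by
            rw [Finset.prod_mul_distrib]
            ring
        _ = (∏ j ∈ Finset.range k, (1 - γ j)) * γ k := by rw [← hγ k (by omega)]
    rw [heval, ha, Finset.prod_range_succ, hkey]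
    ring

end GGTaux

/-- **Proposition 2.5(c)**: the characteristic polynomial of the GGT matrix
`G(α₀,…,α_{n-1})` is `Φ_n`, and in particular
`det(Id - G) = ∏_{k<n} (1 - γ_k)` where the `γ_k` are the deformed Verblunsky
coefficients. -/
theorem ggt_charpoly_eq_szego (n : ℕ) (hn : 1 ≤ n) (α : ℕ → ℂ)
    (h1 : ∀ k, k + 1 < n → ‖α k‖ < 1)
    (h2 : ‖α (n - 1)‖ = 1)
    (γ : ℕ → ℂ)
    (hγ : ∀ k < n, γ k = (starRingEnd ℂ) (α k) *
      ∏ j ∈ Finset.range k, (1 - (starRingEnd ℂ) (γ j)) / (1 - γ j)) :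
    (∀ z : ℂ,
      Matrix.det (z • (1 : Matrix (Fin n) (Fin n) ℂ) - GGT n α) = (szego α n).eval z) ∧
    Matrix.det ((1 : Matrix (Fin n) (Fin n) ℂ) - GGT n α) =
      ∏ k ∈ Finset.range n, (1 - γ k) := by
  have habs : ∀ k, k < n → ‖α k‖ ≤ 1 := by
    intro k hk
    rcases lt_or_ge (k + 1) n with h | h
    · exact (h1 k h).le
    · have hk1 : k = n - 1 := by omega
      rw [hk1, h2]
  obtain ⟨hM, _⟩ := GGTaux.main_ind α n habs
  have part1 : ∀ z : ℂ,
      Matrix.det (z • (1 : Matrix (Fin n) (Fin n) ℂ) - GGT n α) = (szego α n).eval z := by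
    intro z
    rw [GGTaux.Mm_eq]
    exact hM z
  refine ⟨part1, ?_⟩
  have hp := part1 1
  rw [one_smul] at hp
  rw [hp]
  exact GGTaux.szego_eval_one α γ n hγ n le_rfl
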